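/- Let X be a Noetherian integral scheme, H a fixed line bundle with finite-dimensional space of global sections V = H⁰(X, H ⊗ O_X), and let (I_n)_{n ≥ 0} be a descending chain of coherent ideal sheaves on X such that each I_n ⊗ H is globally generated. Then the chain (I_n) stabilizes. -/

import Mathlib

set_option maxHeartbeats 1000000


open AlgebraicGeometry CategoryTheory CategoryTheory.Limits

/-- `X.Modules` is now a plain `def` (no longer reducible to `SheafOfModules X.ringCatSheaf`),
so the additive structure on `𝒪_X ⟶ H` is no longer found by instance search; this restores
the same (`SheafOfModules`) instance that was found on the older library. -/
noncomputable instance instAddCommGroupUnitHomModules (X : Scheme) (H : X.Modules) :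
    AddCommGroup (SheafOfModules.unit X.ringCatSheaf ⟶ H) :=
  SheafOfModules.instAddCommGroupHom X.ringCatSheaf (SheafOfModules.unit X.ringCatSheaf)
    (H : SheafOfModules X.ringCatSheaf)

/-- **Stabilization of descending chains of globally generated twisted ideal
sheaves** (the abstract stabilization lemma).

Let `X` be a Noetherian integral scheme and `H` a line bundle on `X` whose
space of global sections `V = H⁰(X, H) = Hom(𝒪_X, H)` is a finite-dimensional
vector space over a field `k` (the `k`-action being induced by scalars in
`Γ(X, 𝒪_X)`, i.e. factoring through endomorphisms of the structure sheaf).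
A descending chain of coherent ideal sheaves `I_n` with each `I_n ⊗ H`
globally generated corresponds, via `J_n := I_n·H ⊆ H` (`H` being invertible),
to a descending chain `J : ℕ → Subobject H` of subsheaves of `H`, each
globally generated (i.e. generated by its global sections).  Then the chain
`(J_n)` — equivalently, the chain `(I_n)` — stabilizes. -/
theorem descending_chain_of_globally_generated_subsheaves_stabilizes
    (X : Scheme) [IsIntegral X] [AlgebraicGeometry.IsNoetherian X]
    (H : X.Modules)
    (k : Type*) [Field k]
    [Module k (SheafOfModules.unit X.ringCatSheaf ⟶ H)]
    [FiniteDimensional k (SheafOfModules.unit X.ringCatSheaf ⟶ H)]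
    (hk : ∀ c : k, ∃ u : SheafOfModules.unit X.ringCatSheaf ⟶
        SheafOfModules.unit X.ringCatSheaf,
      ∀ f : SheafOfModules.unit X.ringCatSheaf ⟶ H, c • f = u ≫ f)
    (J : ℕ → Subobject H)
    (hdesc : ∀ n, J (n + 1) ≤ J n)
    (hgg : ∀ n, Nonempty ((Subobject.underlying.obj (J n)).GeneratingSections)) :
    ∃ n₀, ∀ n, n₀ ≤ n → J n = J n₀ := by
  have hanti : Antitone J := antitone_nat_of_succ_le hdesc
  -- the submodule of global sections of `H` factoring through `J n`
  set V : ℕ → Submodule k (SheafOfModules.unit X.ringCatSheaf ⟶ H) := fun n =>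
    { carrier := {f | ∃ g : SheafOfModules.unit X.ringCatSheaf ⟶
        Subobject.underlying.obj (J n), f = g ≫ (J n).arrow}
      zero_mem' := ⟨0, (Limits.zero_comp).symm⟩
      add_mem' := by
        rintro f f' ⟨g, rfl⟩ ⟨g', rfl⟩
        exact ⟨g + g', (Preadditive.add_comp _ _ _ _ _ _).symm⟩
      smul_mem' := by
        rintro c f ⟨g, rfl⟩
        obtain ⟨u, hu⟩ := hk c
        exact ⟨u ≫ g, by rw [hu]; exact (Category.assoc _ _ _).symm⟩ } with hV
  have hVanti : ∀ {m n : ℕ}, m ≤ n → V n ≤ V m := by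
    intro m n hmn f hf
    obtain ⟨g, rfl⟩ := hf
    exact ⟨g ≫ Subobject.ofLE _ _ (hanti hmn), by erw [Category.assoc, Subobject.ofLE_arrow]; rfl⟩
  -- the descending chain of submodules stabilizes
  obtain ⟨n₀, hn₀⟩ := IsArtinian.monotone_stabilizes
    (⟨fun n => OrderDual.toDual (V n), fun _ _ h => hVanti h⟩ :
      ℕ →o (Submodule k (SheafOfModules.unit X.ringCatSheaf ⟶ H))ᵒᵈ)
  refine ⟨n₀, fun n hn => le_antisymm (hanti hn) ?_⟩
  have hVeq : V n = V n₀ := congrArg OrderDual.ofDual (hn₀ n hn).symm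
  -- use global generation of `J n₀`
  obtain ⟨σ⟩ := hgg n₀
  -- each generating section of `J n₀`, viewed in `H`, lies in `V n₀ = V n`,
  -- hence factors through `J n`
  have hfac : ∀ i : σ.I, ∃ g : SheafOfModules.unit X.ringCatSheaf ⟶
      Subobject.underlying.obj (J n),
      (Subobject.underlying.obj (J n₀)).unitHomEquiv.symm (σ.s i) ≫ (J n₀).arrow
        = g ≫ (J n).arrow := by
    intro i
    have : ((Subobject.underlying.obj (J n₀)).unitHomEquiv.symm (σ.s i) ≫ (J n₀).arrow)
        ∈ V n₀ := ⟨_, rfl⟩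
    rw [← hVeq] at this
    exact this
  choose g hg using hfac
  -- the induced comparison from the free sheaf
  set φ : SheafOfModules.free σ.I ⟶ Subobject.underlying.obj (J n) :=
    (Subobject.underlying.obj (J n)).freeHomEquiv.symm
      (fun i => (Subobject.underlying.obj (J n)).unitHomEquiv (g i)) with hφ
  have hcomm : σ.π ≫ (J n₀).arrow = φ ≫ (J n).arrow := by
    erw [SheafOfModules.freeHomEquiv_symm_comp, hφ,
      SheafOfModules.freeHomEquiv_symm_comp]
    congr 1
    funext i
    erw [← SheafOfModules.unitHomEquiv_comp_apply]
    have : SheafOfModules.sectionsMap (J n₀).arrow (σ.s i)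
        = H.unitHomEquiv ((Subobject.underlying.obj (J n₀)).unitHomEquiv.symm (σ.s i)
            ≫ (J n₀).arrow) := by
      erw [SheafOfModules.unitHomEquiv_comp_apply, Equiv.apply_symm_apply]
    rw [this, hg i]
  -- descend `φ` along the strong epimorphism `σ.π` using the lifting property
  have hstrong : StrongEpi σ.π := by haveI := σ.epi; exact strongEpi_of_epi σ.π
  have sq : CommSq φ σ.π (J n).arrow (J n₀).arrow := ⟨hcomm.symm⟩
  haveI : sq.HasLift := by
    haveI : Mono (J n).arrow := (J n).arrow_mono
    have hl := @StrongEpi.llp _ _ _ _ _ hstrong _ _ (J n).arrow (J n).arrow_mono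
    exact HasLiftingProperty.sq_hasLift (self := hl) sq
  exact Subobject.le_of_comm sq.lift sq.fac_right
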